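/- Let d ≥ 2 and let D = {(A_i^{(1)},…,A_i^{(d)})}_{1≤i≤m} be a skew Bollobás system of d-partitions of [n] such that A_i^{(1)} < A_i^{(2)} < ⋯ < A_i^{(d)} for every i ∈ [m], and let s = |⋃_{i=1}^m ⋃_{r=1}^d A_i^{(r)}|. Then m ≤ binom(s + d - 1, d - 1). -/

import Mathlib

/-- **Proposition (upper bound of `N_skew(d,s)`).** If
`{(A_i^{(1)}, …, A_i^{(d)})}_{1 ≤ i ≤ m}` is a skew Bollobás system of
`d`-partitions of `[n]` with `A_i^{(1)} < A_i^{(2)} < ⋯ < A_i^{(d)}` for every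
`i`, and `s` is the size of the support, then `m ≤ C(s + d - 1, d - 1)`. -/
theorem skew_bollobas_ordered_count (n d m : ℕ) (hd : 2 ≤ d)
    (A : Fin m → Fin d → Finset ℕ)
    (hAsub : ∀ i r, A i r ⊆ Finset.Icc 1 n)
    (hAdisj : ∀ i, ∀ p q : Fin d, p ≠ q → Disjoint (A i p) (A i q))
    (hskew : ∀ i j : Fin m, i < j →
      ∃ p q : Fin d, p < q ∧ ((A i p) ∩ (A j q)).Nonempty)
    (hord : ∀ i, ∀ r₁ r₂ : Fin d, r₁ < r₂ →
      ∀ x ∈ A i r₁, ∀ y ∈ A i r₂, x < y) :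
    m ≤ ((Finset.univ.biUnion fun i : Fin m =>
          Finset.univ.biUnion fun r : Fin d => A i r).card + d - 1).choose (d - 1) := by
  classical
  set S : Finset ℕ := (Finset.univ.biUnion fun i : Fin m =>
          Finset.univ.biUnion fun r : Fin d => A i r) with hS
  set c : Fin m → ℕ → ℕ := fun i r =>
    (S.filter fun x => ∃ q : Fin d, (q : ℕ) ≤ r ∧ ∃ y ∈ A i q, x ≤ y).card with hc
  have hcle : ∀ i r, c i r ≤ S.card := fun i r =>
    Finset.card_le_card (Finset.filter_subset _ _)
  have hmono : ∀ i, Monotone (c i) := by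
    intro i r1 r2 h
    apply Finset.card_le_card
    apply Finset.monotone_filter_right
    rintro x _ ⟨q, hq, hy⟩
    exact ⟨q, hq.trans h, hy⟩
  have key : ∀ i j : Fin m, i < j → ∃ r : ℕ, r < d - 1 ∧ c j r < c i r := by
    intro i j hij
    obtain ⟨p, q, hpq, x, hx⟩ := hskew i j hij
    rw [Finset.mem_inter] at hx
    refine ⟨p, ?_, ?_⟩
    · have h1 := q.isLt
      have h2 : (p : ℕ) < (q : ℕ) := hpq
      omega
    · have hxS : x ∈ S := by
        rw [hS]
        simp only [Finset.mem_biUnion, Finset.mem_univ, true_and]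
        exact ⟨i, p, hx.1⟩
      have h1 : (S.filter fun x' => ∃ q' : Fin d, (q' : ℕ) ≤ (p : ℕ) ∧ ∃ y ∈ A j q', x' ≤ y)
          ⊆ S.filter fun x' => x' < x := by
        intro x' hx'
        rw [Finset.mem_filter] at hx' ⊢
        obtain ⟨hmem, q', hq', y, hy, hxy⟩ := hx'
        have hlt : q' < q := by
          have : (p : ℕ) < (q : ℕ) := hpq
          exact Fin.lt_def.mpr (by omega)
        exact ⟨hmem, lt_of_le_of_lt hxy (hord j q' q hlt y hy x hx.2)⟩
      have h2 : (S.filter fun x' => x' ≤ x)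
          ⊆ S.filter fun x' => ∃ q' : Fin d, (q' : ℕ) ≤ (p : ℕ) ∧ ∃ y ∈ A i q', x' ≤ y := by
        intro x' hx'
        rw [Finset.mem_filter] at hx' ⊢
        exact ⟨hx'.1, p, le_refl _, x, hx.1, hx'.2⟩
      have h3 : (S.filter fun x' => x' < x) ⊂ S.filter fun x' => x' ≤ x := by
        constructor
        · intro x' hx'
          rw [Finset.mem_filter] at hx' ⊢
          exact ⟨hx'.1, le_of_lt hx'.2⟩
        · intro hsub
          have := hsub (Finset.mem_filter.mpr ⟨hxS, le_refl x⟩)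
          rw [Finset.mem_filter] at this
          exact lt_irrefl x this.2
      calc c j p ≤ _ := Finset.card_le_card h1
        _ < _ := Finset.card_lt_card h3
        _ ≤ c i p := Finset.card_le_card h2
  -- the injection into `Sym (Fin (S.card + 1)) (d - 1)`
  set g : Fin m → Fin (d - 1) → Fin (S.card + 1) := fun i r =>
    ⟨c i r, Nat.lt_succ_of_le (hcle i r)⟩ with hg
  have hgmono : ∀ i, Monotone (g i) := by
    intro i r1 r2 h
    exact Fin.mk_le_mk.mpr (hmono i (by exact_mod_cast h))
  set F : Fin m → Sym (Fin (S.card + 1)) (d - 1) := fun i =>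
    ⟨(List.ofFn (g i) : Multiset (Fin (S.card + 1))), by simp⟩ with hF
  have hFinj : Function.Injective F := by
    intro i j hFij
    by_contra hne
    have hlists : List.ofFn (g i) = List.ofFn (g j) := by
      have hm := congrArg Subtype.val hFij
      have hperm : List.Perm (List.ofFn (g i)) (List.ofFn (g j)) := Multiset.coe_eq_coe.mp hm
      exact List.Perm.eq_of_sortedLE ((hgmono i).sortedLE_ofFn) ((hgmono j).sortedLE_ofFn) hperm
    have hgeq : g i = g j := List.ofFn_injective hlists
    have hcij : ∀ r : ℕ, r < d - 1 → c i r = c j r := by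
      intro r hr
      have := congrFun hgeq ⟨r, hr⟩
      simpa [hg, Fin.ext_iff] using this
    rcases lt_or_gt_of_ne hne with h | h
    · obtain ⟨r, hr, hlt⟩ := key i j h
      exact absurd (hcij r hr) (ne_of_gt hlt)
    · obtain ⟨r, hr, hlt⟩ := key j i h
      exact absurd (hcij r hr) (ne_of_lt hlt)
  have hcard := Fintype.card_le_of_injective F hFinj
  rw [Fintype.card_fin] at hcard
  have hsym : Fintype.card (Sym (Fin (S.card + 1)) (d - 1))
      = (S.card + d - 1).choose (d - 1) := by
    rw [Sym.card_sym_eq_choose, Fintype.card_fin]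
    congr 1
    omega
  rw [hsym] at hcard
  exact hcard
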